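/- Let U, V be finite-dimensional vector spaces over a field F and h, h'' : U → V linear maps. If h''(ker h) is not contained in h(U), then the set of scalars α ∈ F for which rank(h + α·h'') ≤ rank(h) has cardinality at most rank(h) + 1. In particular, if |F| > rank(h) + 1 there exists α with rank(h + α·h'') > rank(h). -/

import Mathlib

open LinearMap Polynomial Matrix Module

set_option maxHeartbeats 1600000 in
theorem stmt1 (F U V : Type*) [Field F] [AddCommGroup U] [Module F U]
    [AddCommGroup V] [Module F V] [FiniteDimensional F U] [FiniteDimensional F V]
    (h h'' : U →ₗ[F] V)
    (hne : ¬ (LinearMap.ker h).map h'' ≤ LinearMap.range h) :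
    ∃ bad : Finset F, bad.card ≤ Module.finrank F (LinearMap.range h) + 1 ∧
      ∀ α : F, α ∉ bad →
        Module.finrank F (LinearMap.range h) <
          Module.finrank F (LinearMap.range (h + α • h'')) := by
  classical
  set r := Module.finrank F (LinearMap.range h) with hr
  -- get u ∈ ker h with h'' u ∉ range h
  obtain ⟨w, hwmem, hwnot⟩ := SetLike.not_le_iff_exists.mp hne
  obtain ⟨u, hu, rfl⟩ := Submodule.mem_map.mp hwmem
  replace hu : h u = 0 := hu
  -- basis of range h and preimages
  let b : Basis (Fin r) F (LinearMap.range h) := Module.finBasis F _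
  have hx : ∀ j : Fin r, ∃ x : U, h x = (b j : V) := fun j => (b j).2
  choose x hx using hx
  -- projection onto range h
  obtain ⟨cW, hcW⟩ := (LinearMap.range h).exists_isCompl
  let p := Submodule.linearProjOfIsCompl _ _ hcW
  let ψ : Fin r → (V →ₗ[F] F) := fun i => (b.coord i).comp p
  -- functional φ vanishing on range h with φ (h'' u) = 1
  let π := (LinearMap.range h).mkQ
  have hz : π (h'' u) ≠ 0 := by
    simpa [π, Submodule.Quotient.mk_eq_zero] using hwnot
  obtain ⟨cz, hcz⟩ := (Submodule.span F {π (h'' u)}).exists_isCompl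
  let p' := Submodule.linearProjOfIsCompl _ _ hcz
  let φ : V →ₗ[F] F :=
    ((LinearEquiv.coord F _ (π (h'' u)) hz).toLinearMap.comp p').comp π
  have hφ0 : ∀ v ∈ LinearMap.range h, φ v = 0 := by
    intro v hv
    have : π v = 0 := by simpa [π, Submodule.Quotient.mk_eq_zero] using hv
    simp [φ, this]
  have hφ1 : φ (h'' u) = 1 := by
    have hmem : π (h'' u) ∈ Submodule.span F {π (h'' u)} :=
      Submodule.mem_span_singleton_self _
    have hp' : p' (π (h'' u)) = ⟨π (h'' u), hmem⟩ :=
      Submodule.linearProjOfIsCompl_apply_left hcz ⟨π (h'' u), hmem⟩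
    simp only [φ, LinearMap.comp_apply, hp']
    exact LinearEquiv.coord_self F _ _ hz
  -- corrected functionals
  let ψ' : Fin r → (V →ₗ[F] F) := fun i => ψ i - (ψ i (h'' u)) • φ
  have hψ'b : ∀ i j : Fin r, ψ' i (b j : V) = if i = j then 1 else 0 := by
    intro i j
    have hpb : p (b j : V) = b j := Submodule.linearProjOfIsCompl_apply_left hcW (b j)
    have hφb : φ (b j : V) = 0 := hφ0 _ (b j).2
    simp only [ψ', ψ, LinearMap.sub_apply, LinearMap.smul_apply, LinearMap.comp_apply,
      hpb, hφb, smul_eq_mul, mul_zero, sub_zero, Basis.coord_apply, Basis.repr_self]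
    rw [Finsupp.single_apply]
    simp [eq_comm]
  have hψ'u : ∀ i : Fin r, ψ' i (h'' u) = 0 := by
    intro i
    simp [ψ', hφ1]
  -- the combined map Q and test vectors y
  let Q : V →ₗ[F] (Fin (r + 1) → F) := LinearMap.pi (Fin.snoc ψ' φ)
  let y : Fin (r + 1) → U := Fin.snoc x u
  let L : Fin (r + 1) := Fin.last r
  let Amat : Matrix (Fin (r + 1)) (Fin (r + 1)) F := fun i j => Q (h (y j)) i
  let Bmat : Matrix (Fin (r + 1)) (Fin (r + 1)) F := fun i j => Q (h'' (y j)) i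
  have hA : ∀ (i : Fin (r + 1)) (j : Fin r),
      Amat i (Fin.castSucc j) = (1 : Matrix (Fin (r + 1)) (Fin (r + 1)) F) i (Fin.castSucc j) := by
    intro i j
    have hyj : y (Fin.castSucc j) = x j := by simp [y]
    have hQ : Amat i (Fin.castSucc j) =
        Fin.snoc (α := fun _ => V →ₗ[F] F) ψ' φ i ((b j : V)) := by
      show Fin.snoc (α := fun _ => V →ₗ[F] F) ψ' φ i (h (y (Fin.castSucc j))) = _
      rw [hyj, hx]
    rw [hQ]
    refine Fin.lastCases ?_ (fun i' => ?_) i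
    · rw [Fin.snoc_last]
      rw [hφ0 _ (b j).2, Matrix.one_apply_ne]
      exact (Fin.castSucc_lt_last j).ne'
    · rw [Fin.snoc_castSucc, hψ'b i' j, Matrix.one_apply]
      simp [Fin.castSucc_inj]
  have hAL : ∀ i, Amat i L = 0 := by
    intro i
    have hyL : y L = u := by simp [y, L]
    simp [Amat, Q, hyL, hu]
  have hBL : ∀ i, Bmat i L = if i = L then 1 else 0 := by
    intro i
    have hyL : y L = u := by simp [y, L]
    refine Fin.lastCases ?_ (fun i' => ?_) i
    · simp [Bmat, Q, hyL, hφ1, L]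
    · have : Bmat (Fin.castSucc i') L = ψ' i' (h'' u) := by
        simp [Bmat, Q, hyL]
      rw [this, hψ'u i', if_neg (Fin.castSucc_lt_last i').ne]
  -- the polynomial matrix
  let Nmat : Matrix (Fin (r + 1)) (Fin (r + 1)) F[X] :=
    (X : F[X]) • Bmat.map C + Amat.map C
  have hdeg : (det Nmat).natDegree ≤ r + 1 := by
    simpa using Polynomial.natDegree_det_X_add_C_le Bmat Amat
  -- nonvanishing of det Nmat
  let e : Fin (r + 1) → F := fun i => if i = L then 1 else 0
  let A' : Matrix (Fin (r + 1)) (Fin (r + 1)) F := Matrix.updateCol Amat L e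
  let B' : Matrix (Fin (r + 1)) (Fin (r + 1)) F := Matrix.updateCol Bmat L 0
  let Mmat : Matrix (Fin (r + 1)) (Fin (r + 1)) F[X] :=
    (X : F[X]) • B'.map C + A'.map C
  have hMcol : ∀ i, Mmat i L = C (e i) := by
    intro i; simp [Mmat, B', A', Matrix.updateCol_apply]
  have hA'one : A' = 1 := by
    ext i j
    by_cases hj : j = L
    · subst hj
      simp only [A', Matrix.updateCol_apply, if_pos rfl, e]
      rw [Matrix.one_apply]
      simp [eq_comm]
    · show (Matrix.updateCol Amat L e) i j = _
      rw [Matrix.updateCol_apply, if_neg hj]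
      obtain ⟨j', rfl⟩ : ∃ j' : Fin r, j = Fin.castSucc j' := by
        refine ⟨⟨(j : ℕ), ?_⟩, ?_⟩
        · exact lt_of_le_of_ne (Nat.lt_succ_iff.mp j.2) (fun hc => hj (Fin.ext hc))
        · exact (Fin.ext rfl)
      exact hA i j'
  have hMne : det Mmat ≠ 0 := by
    intro hc
    have h0 : coeff (det Mmat) 0 = det A' := Polynomial.coeff_det_X_add_C_zero B' A'
    rw [hc] at h0
    rw [hA'one, Matrix.det_one] at h0
    simp at h0
  have hNM : Nmat = Matrix.updateCol Mmat L ((X : F[X]) • fun i => C (e i)) := by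
    ext i j
    by_cases hj : j = L
    · subst hj
      rw [Matrix.updateCol_apply, if_pos rfl]
      simp only [Nmat, Matrix.add_apply, Matrix.smul_apply, Matrix.map_apply, hBL i, hAL i,
        Pi.smul_apply, e]
      simp [smul_eq_mul, apply_ite C]
    · rw [Matrix.updateCol_apply, if_neg hj]
      simp [Nmat, Mmat, B', A', Matrix.updateCol_apply, if_neg hj]
  have hMM : Matrix.updateCol Mmat L (fun i => C (e i)) = Mmat := by
    ext i j
    by_cases hj : j = L
    · subst hj; rw [Matrix.updateCol_apply, if_pos rfl, hMcol]
    · rw [Matrix.updateCol_apply, if_neg hj]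
  have hNdet : det Nmat = X * det Mmat := by
    rw [hNM, Matrix.det_updateCol_smul, hMM]
  have hNne : det Nmat ≠ 0 := by
    rw [hNdet]; exact mul_ne_zero Polynomial.X_ne_zero hMne
  -- the bad set
  refine ⟨(det Nmat).roots.toFinset, ?_, ?_⟩
  · calc (det Nmat).roots.toFinset.card ≤ Multiset.card (det Nmat).roots :=
        Multiset.toFinset_card_le _
      _ ≤ (det Nmat).natDegree := Polynomial.card_roots' _
      _ ≤ r + 1 := hdeg
  · intro α hα
    have heval : eval α (det Nmat) ≠ 0 := by
      intro hc
      exact hα (Multiset.mem_toFinset.mpr ((Polynomial.mem_roots hNne).mpr hc))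
    -- the evaluated matrix
    let Cmat : Matrix (Fin (r + 1)) (Fin (r + 1)) F := fun i j => Amat i j + α * Bmat i j
    have hmap : Nmat.map (eval α) = Cmat := by
      ext i j
      show eval α ((X • Bmat.map C + Amat.map C : Matrix _ _ F[X]) i j) = Amat i j + α * Bmat i j
      simp only [Matrix.add_apply, Matrix.smul_apply, Matrix.map_apply, smul_eq_mul,
        eval_add, eval_mul, eval_X, eval_C]
      ring
    have hCdet : Cmat.det ≠ 0 := by
      have h2 : eval α (det Nmat) = det Cmat := by
        rw [← hmap]
        exact (Polynomial.evalRingHom α).map_det Nmat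
      rw [← h2]
      exact heval
    have hQw : ∀ j i, Q ((h + α • h'') (y j)) i = Cmat i j := by
      intro j i
      have hw : (h + α • h'') (y j) = h (y j) + α • h'' (y j) := rfl
      rw [hw, map_add, Q.map_smul]
      rfl
    have hli : LinearIndependent F (fun j => (h + α • h'') (y j)) := by
      rw [Fintype.linearIndependent_iff]
      intro a ha
      have hQ0 : Q (∑ j, a j • (h + α • h'') (y j)) = 0 := by rw [ha]; exact map_zero Q
      have hsum : ∀ i, ∑ j, a j * Cmat i j = 0 := by
        intro i
        have h2 : Q (∑ j, a j • (h + α • h'') (y j)) i = ∑ j, a j * Cmat i j := by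
          rw [map_sum, Finset.sum_apply]
          refine Finset.sum_congr rfl fun j _ => ?_
          rw [Q.map_smul]
          show a j * Q ((h + α • h'') (y j)) i = _
          rw [hQw]
        rw [hQ0] at h2
        simpa using h2.symm
      have hmv : Cmat.mulVec a = 0 := by
        funext i
        show ∑ j, Cmat i j * a j = 0
        rw [← hsum i]
        exact Finset.sum_congr rfl fun j _ => mul_comm _ _
      have := Matrix.eq_zero_of_mulVec_eq_zero hCdet hmv
      exact fun i => congrFun this i
    -- conclude
    have hspan : Submodule.span F (Set.range fun j => (h + α • h'') (y j)) ≤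
        LinearMap.range (h + α • h'') := by
      rw [Submodule.span_le]
      rintro _ ⟨j, rfl⟩
      exact LinearMap.mem_range_self _ _
    have h1 : Module.finrank F (Submodule.span F (Set.range fun j => (h + α • h'') (y j)))
        = r + 1 := by
      rw [finrank_span_eq_card hli, Fintype.card_fin]
    have h2 := Submodule.finrank_mono hspan
    omega
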